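/- The class of semi-generalized co-Bassian abelian groups is closed under taking direct summands: if G = H ⊕ G' is semi-generalized co-Bassian, then H is semi-generalized co-Bassian. -/
import Mathlib


/-- The subgroup of elements annihilated by some power of `p`
(the `p`-primary component). -/
def pComponent (G : Type*) [AddCommGroup G] (p : ℕ) : AddSubgroup G where
  carrier := {x | ∃ k : ℕ, p ^ k • x = 0}
  zero_mem' := ⟨0, smul_zero _⟩
  add_mem' := by
    rintro a b ⟨k, hk⟩ ⟨l, hl⟩
    exact ⟨k + l, by
      rw [smul_add, pow_add, mul_smul, mul_smul, smul_comm (p ^ k) (p ^ l) a, hk, hl,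
        smul_zero, smul_zero, add_zero]⟩
  neg_mem' := by
    rintro a ⟨k, hk⟩
    exact ⟨k, by rw [smul_neg, hk, neg_zero]⟩

/-- The torsion subgroup. -/
def torsionSub (G : Type*) [AddCommGroup G] : AddSubgroup G where
  carrier := {x | ∃ n : ℕ, 0 < n ∧ n • x = 0}
  zero_mem' := ⟨1, one_pos, smul_zero _⟩
  add_mem' := by
    rintro a b ⟨m, hm, hma⟩ ⟨n, hn, hnb⟩
    exact ⟨m * n, Nat.mul_pos hm hn, by
      rw [smul_add, mul_smul, mul_smul, smul_comm m n a, hma, hnb, smul_zero, smul_zero,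
        add_zero]⟩
  neg_mem' := by
    rintro a ⟨n, hn, hna⟩
    exact ⟨n, hn, by rw [smul_neg, hna, neg_zero]⟩

/-- A subgroup `A` is essential in a direct summand of the ambient group. -/
def EssentialInSummand {G : Type*} [AddCommGroup G] (A : AddSubgroup G) : Prop :=
  ∃ S S' : AddSubgroup G, IsCompl S S' ∧ A ≤ S ∧
    ∀ X : AddSubgroup G, X ≤ S → X ≠ ⊥ → A ⊓ X ≠ ⊥

/-- Semi-generalized co-Bassian group. -/
def IsSGCB (G : Type*) [AddCommGroup G] : Prop :=
  ∀ (N : AddSubgroup G) (φ : G →+ G ⧸ N), Function.Injective φ →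
    EssentialInSummand φ.range

/-- Divisible abelian group. -/
def IsDivisibleGroup (G : Type*) [AddCommGroup G] : Prop :=
  ∀ (x : G) (n : ℕ), 0 < n → ∃ y : G, n • y = x

/-- Elementary abelian group: torsion, and each `p`-primary component is killed by `p`. -/
def IsElementaryGroup (G : Type*) [AddCommGroup G] : Prop :=
  (∀ x : G, ∃ n : ℕ, 0 < n ∧ n • x = 0) ∧
    ∀ p : ℕ, p.Prime → ∀ x : G, x ∈ pComponent G p → p • x = 0

/-- `G` decomposes as (divisible) ⊕ (elementary). -/
def IsDplusE (G : Type*) [AddCommGroup G] : Prop :=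
  ∃ D E : AddSubgroup G, IsCompl D E ∧ IsDivisibleGroup ↥D ∧ IsElementaryGroup ↥E

/-- The Prüfer `p`-group, realized as the `p`-primary component of `ℚ/ℤ`. -/
def PruferGroup (p : ℕ) : Type :=
  ↥(pComponent (ℚ ⧸ AddSubgroup.zmultiples (1 : ℚ)) p)

instance (p : ℕ) : AddCommGroup (PruferGroup p) :=
  inferInstanceAs (AddCommGroup ↥(pComponent (ℚ ⧸ AddSubgroup.zmultiples (1 : ℚ)) p))

/-- `Z_{p^α}` for `α ∈ ℕ ∪ {∞}`: the cyclic group `ZMod (p^n)` for `α = n` finite,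
and the Prüfer `p`-group for `α = ∞`. -/
def Zp (p : ℕ) (α : ℕ∞) : Type :=
  WithTop.recTopCoe (PruferGroup p) (fun n => ZMod (p ^ n)) α

instance (p : ℕ) (α : ℕ∞) : AddCommGroup (Zp p α) := by
  induction α using WithTop.recTopCoe with
  | top => exact inferInstanceAs (AddCommGroup (PruferGroup p))
  | coe n => exact inferInstanceAs (AddCommGroup (ZMod (p ^ n)))

/-- A `p`-group has generalized finite `p`-rank if it is a finite direct sum of
homocyclic components `Z_{p^{σ_j}}^{(ρ_j)}` with `σ_1 < ⋯ < σ_n` in `ω ∪ {∞}` and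
`ρ_j` finite for all `j > 1`. -/
def HasGenFiniteRank (p : ℕ) (H : Type u) [AddCommGroup H] : Prop :=
  ∃ (n : ℕ) (σ : Fin n → ℕ∞) (ρ : Fin n → Type u),
    StrictMono σ ∧ (∀ j : Fin n, 0 < j.val → Finite (ρ j)) ∧
      Nonempty (H ≃+ DirectSum (Fin n) (fun j => ρ j →₀ Zp p (σ j)))


/-- Hopfian group: every surjective endomorphism is injective. -/
def IsHopfian (G : Type*) [AddCommGroup G] : Prop :=
  ∀ φ : G →+ G, Function.Surjective φ → Function.Injective φ

/-- co-Bassian group. -/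
def IsCoBassian (G : Type*) [AddCommGroup G] : Prop :=
  ∀ (N : AddSubgroup G) (φ : G →+ G ⧸ N), Function.Injective φ → Function.Surjective φ

/-- generalized co-Bassian group. -/
def IsGenCoBassian (G : Type*) [AddCommGroup G] : Prop :=
  ∀ (N : AddSubgroup G) (φ : G →+ G ⧸ N), Function.Injective φ →
    ∃ S' : AddSubgroup (G ⧸ N), IsCompl φ.range S'

/-- The subgroup `pG` of an abelian group `G`. -/
def smulSub (p : ℕ) (G : Type*) [AddCommGroup G] : AddSubgroup G :=
  (AddMonoidHom.mk' (fun x : G => p • x) (fun a b => smul_add p a b)).range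

lemma essentialInSummand_map {A B : Type*} [AddCommGroup A] [AddCommGroup B]
    (e : A ≃+ B) {K : AddSubgroup A} (h : EssentialInSummand K) :
    EssentialInSummand (K.map e.toAddMonoidHom) := by
  obtain ⟨S, S', ⟨hdis, hcod⟩, hle, hess⟩ := h
  refine ⟨S.map e.toAddMonoidHom, S'.map e.toAddMonoidHom, ⟨?_, ?_⟩,
    AddSubgroup.map_mono hle, ?_⟩
  · rw [disjoint_iff] at hdis ⊢
    rw [← AddSubgroup.map_inf _ _ _ e.injective, hdis, AddSubgroup.map_bot]
  · rw [codisjoint_iff] at hcod ⊢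
    rw [← AddSubgroup.map_sup, hcod]
    exact AddSubgroup.map_top_of_surjective _ e.surjective
  · intro X hX hXne
    set Y := X.comap e.toAddMonoidHom with hY
    have hYmap : Y.map e.toAddMonoidHom = X := by
      ext b
      simp only [AddSubgroup.mem_map, AddSubgroup.mem_comap, hY]
      constructor
      · rintro ⟨a, ha, rfl⟩; exact ha
      · intro hb; exact ⟨e.symm b, by simpa using hb, by simp⟩
    have hYle : Y ≤ S := by
      intro a ha
      have h1 : e.toAddMonoidHom a ∈ X :=
        hYmap ▸ AddSubgroup.mem_map_of_mem e.toAddMonoidHom ha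
      obtain ⟨s, hs, hse⟩ := hX h1
      rwa [show s = a from e.injective hse] at hs
    have hYne : Y ≠ ⊥ := by
      intro hbot
      exact hXne (by rw [← hYmap, hbot, AddSubgroup.map_bot])
    have := hess Y hYle hYne
    intro hbot
    apply this
    rw [eq_bot_iff] at hbot ⊢
    intro a ha
    have : e.toAddMonoidHom a ∈ (K.map e.toAddMonoidHom) ⊓ X := by
      constructor
      · exact AddSubgroup.mem_map_of_mem _ ha.1
      · rw [← hYmap]; exact AddSubgroup.mem_map_of_mem _ ha.2
    have := hbot this
    simpa using (map_eq_zero_iff _ e.injective).mp (by simpa using this)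

lemma essentialInSummand_of_prod {Q₁ Q₂ : Type*} [AddCommGroup Q₁] [AddCommGroup Q₂]
    {K : AddSubgroup Q₁}
    (h : EssentialInSummand (K.prod (⊤ : AddSubgroup Q₂))) : EssentialInSummand K := by
  obtain ⟨S, S', ⟨hdis, hcod⟩, hle, hess⟩ := h
  have hbt : ∀ g : Q₂, ((0 : Q₁), g) ∈ S := fun g =>
    hle (AddSubgroup.mem_prod.mpr ⟨K.zero_mem, trivial⟩)
  set T : AddSubgroup Q₁ := S.comap (AddMonoidHom.inl Q₁ Q₂) with hT
  set T' : AddSubgroup Q₁ := S'.map (AddMonoidHom.fst Q₁ Q₂) with hT'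
  have memT : ∀ x : Q₁, x ∈ T ↔ (x, (0 : Q₂)) ∈ S := fun x => Iff.rfl
  refine ⟨T, T', ⟨?_, ?_⟩, ?_, ?_⟩
  · rw [disjoint_iff, eq_bot_iff]
    rintro x ⟨hx1, hx2⟩
    obtain ⟨⟨a, b⟩, hab, rfl⟩ := hx2
    have h1 : ((a, 0) : Q₁ × Q₂) ∈ S := (memT a).mp hx1
    have h2 : ((a, b) : Q₁ × Q₂) ∈ S := by
      have := S.add_mem h1 (hbt b); simpa using this
    have : ((a, b) : Q₁ × Q₂) ∈ S ⊓ S' := ⟨h2, hab⟩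
    rw [disjoint_iff] at hdis
    have := hdis ▸ this
    simp only [AddSubgroup.mem_bot, Prod.mk_eq_zero] at this
    simpa using this.1
  · rw [codisjoint_iff, eq_top_iff]
    intro x _
    have : ((x, 0) : Q₁ × Q₂) ∈ S ⊔ S' := by
      rw [codisjoint_iff] at hcod; rw [hcod]; trivial
    rw [AddSubgroup.mem_sup] at this
    obtain ⟨⟨a, b⟩, hab, ⟨c, d⟩, hcd, heq⟩ := this
    have hx : a + c = x := congrArg Prod.fst heq
    have haT : a ∈ T := by
      rw [memT]
      have := S.add_mem hab (hbt (-b))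
      simpa using this
    have hcT' : c ∈ T' := ⟨(c, d), hcd, rfl⟩
    rw [← hx]
    exact AddSubgroup.add_mem_sup haT hcT'
  · intro k hk
    exact (memT k).mpr (hle (by simp [AddSubgroup.mem_prod, hk]))
  · intro X hX hXne hbot
    obtain ⟨⟨x, hxX⟩, hxne0⟩ := (AddSubgroup.ne_bot_iff_exists_ne_zero).mp hXne
    have hxne : x ≠ 0 := fun hh => hxne0 (Subtype.ext hh)
    have hXS : X.prod (⊥ : AddSubgroup Q₂) ≤ S := by
      rintro ⟨a, b⟩ ⟨ha, hb⟩
      simp only [AddSubgroup.mem_bot] at hb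
      subst hb
      exact (memT a).mp (hX ha)
    have hXne' : X.prod (⊥ : AddSubgroup Q₂) ≠ ⊥ := by
      intro hh
      have : (x, (0:Q₂)) ∈ X.prod (⊥ : AddSubgroup Q₂) := by simp [AddSubgroup.mem_prod, hxX]
      rw [hh] at this
      simp only [AddSubgroup.mem_bot, Prod.mk_eq_zero] at this
      exact hxne this.1
    apply hess _ hXS hXne'
    rw [eq_bot_iff]
    rintro ⟨a, b⟩ hmem
    have h1 := AddSubgroup.mem_prod.mp hmem.1
    have h2 := AddSubgroup.mem_prod.mp hmem.2
    have hb : b = 0 := AddSubgroup.mem_bot.mp h2.2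
    have haKX : a ∈ K ⊓ X := ⟨h1.1, h2.1⟩
    rw [hbot] at haKX
    have ha : a = 0 := AddSubgroup.mem_bot.mp haKX
    simp [AddSubgroup.mem_bot, Prod.ext_iff, ha, hb]

theorem isSGCB_of_summand (H G' : Type*) [AddCommGroup H] [AddCommGroup G']
    (h : IsSGCB (H × G')) : IsSGCB H := by
  intro N φ hφ
  set f : H × G' →+ (H ⧸ N) × G' :=
    (QuotientAddGroup.mk' N).prodMap (AddMonoidHom.id G') with hf
  have hfsurj : Function.Surjective f := by
    rw [hf, AddMonoidHom.coe_prodMap]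
    exact Function.Surjective.prodMap (QuotientAddGroup.mk'_surjective N) Function.surjective_id
  let e : ((H × G') ⧸ f.ker) ≃+ (H ⧸ N) × G' :=
    QuotientAddGroup.quotientKerEquivOfSurjective f hfsurj
  set g : H × G' →+ (H ⧸ N) × G' := φ.prodMap (AddMonoidHom.id G') with hg
  set ψ : H × G' →+ (H × G') ⧸ f.ker := e.symm.toAddMonoidHom.comp g with hψdef
  have hginj : Function.Injective g := by
    rw [hg, AddMonoidHom.coe_prodMap]
    exact hφ.prodMap Function.injective_id
  have hψ : Function.Injective ψ := e.symm.injective.comp hginj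
  have hmain := h f.ker ψ hψ
  have hmap := essentialInSummand_map e hmain
  have hrange : ψ.range.map e.toAddMonoidHom = g.range := by
    ext y
    simp only [AddSubgroup.mem_map, AddMonoidHom.mem_range]
    constructor
    · rintro ⟨_, ⟨x, rfl⟩, rfl⟩
      exact ⟨x, by simp [hψdef]⟩
    · rintro ⟨x, rfl⟩
      exact ⟨ψ x, ⟨x, rfl⟩, by simp [hψdef]⟩
  have hrange2 : g.range = φ.range.prod ⊤ := by
    ext p
    simp only [AddMonoidHom.mem_range, AddSubgroup.mem_prod, AddMonoidHom.mem_range,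
      AddSubgroup.mem_top, and_true]
    constructor
    · rintro ⟨⟨x, y⟩, hxy⟩
      refine ⟨x, ?_⟩
      rw [hg] at hxy
      simpa using congrArg Prod.fst hxy
    · rintro ⟨x, hx⟩
      refine ⟨(x, p.2), ?_⟩
      rw [hg]
      simp [Prod.ext_iff, hx]
  rw [hrange, hrange2] at hmap
  exact essentialInSummand_of_prod hmap
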